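/- Let T be the 2×2 integer matrix with entries T₁₁ = n, T₁₂ = 0, T₂₁ = 0, T₂₂ = m, where n ≥ m ≥ 2, and let D ⊂ ℤ² be any finite digit set. Set b₁ = (n−1, 0)ᵀ, b₂ = (0, m−1)ᵀ, b₃ = (n−1, m−1)ᵀ. Then the neighbor set 𝒩 of F(T,D) contains { ±k·e_i : k ≥ 1 an integer, i ∈ {1,2,3}, k·b_i ∈ ΔD } ∪ { ±(k·e₁ + l·e₂) : k, l ≥ 1 integers, k·b₁ + l·b₂ ∈ ΔD } ∪ { ±(k·e₁ − l·e₂) : k, l ≥ 1 integers, k·b₁ − l·b₂ ∈ ΔD }. -/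

import Mathlib

open Matrix Pointwise Filter
/-- The canonical cast of an integer vector to a real vector. -/
def castVec {k : ℕ} (d : Fin k → ℤ) : Fin k → ℝ := fun i => (d i : ℝ)

/-- The lower triangular matrix `[[n, 0], [t, m]]`, as a real matrix. -/
noncomputable def Tmat (n t m : ℤ) : Matrix (Fin 2) (Fin 2) ℝ :=
  !![(n : ℝ), 0; (t : ℝ), (m : ℝ)]

/-- `a ∈ ΔD = D - D`. -/
def InDelta (D : Finset (Fin 2 → ℤ)) (a : Fin 2 → ℤ) : Prop :=
  ∃ d ∈ D, ∃ d' ∈ D, a = d - d'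

lemma Tinv (n m : ℤ) (hn : 2 ≤ n) (hm : 2 ≤ m) :
    (Tmat n 0 m)⁻¹ = !![((n:ℝ))⁻¹, 0; 0, ((m:ℝ))⁻¹] := by
  have hn' : (n:ℝ) ≠ 0 := by exact_mod_cast (by omega : n ≠ 0)
  have hm' : (m:ℝ) ≠ 0 := by exact_mod_cast (by omega : m ≠ 0)
  apply Matrix.inv_eq_right_inv
  rw [Tmat, Matrix.mul_fin_two]
  field_simp
  rw [Matrix.one_fin_two]
  simp

lemma key (n m : ℤ) (hn : 2 ≤ n) (hm : 2 ≤ m)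
    (D : Finset (Fin 2 → ℤ)) (F : Set (Fin 2 → ℝ)) (hne : F.Nonempty)
    (hcpt : IsCompact F)
    (hfix : F = ⋃ d ∈ D, (fun x => (Tmat n 0 m)⁻¹ *ᵥ (x + castVec d)) '' F)
    (v z : Fin 2 → ℤ) (hv : InDelta D v)
    (h0 : (n - 1) * z 0 = v 0) (h1 : (m - 1) * z 1 = v 1) :
    castVec z ∈ F - F := by
  have hn' : (n:ℝ) ≠ 0 := by exact_mod_cast (by omega : n ≠ 0)
  have hm' : (m:ℝ) ≠ 0 := by exact_mod_cast (by omega : m ≠ 0)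
  set c : Fin 2 → ℝ := ![(n:ℝ), (m:ℝ)] with hc
  set f : (Fin 2 → ℝ) → (Fin 2 → ℝ) := fun w => (Tmat n 0 m)⁻¹ *ᵥ (w + castVec v) with hf
  have hcomp : ∀ w : Fin 2 → ℝ, ∀ i, f w i = (c i)⁻¹ * (w i + castVec v i) := by
    intro w i
    rw [hf]
    simp only [Tinv n m hn hm]
    fin_cases i <;>
      simp [Matrix.mulVec, dotProduct, Fin.sum_univ_two, hc, Matrix.vecHead, Matrix.vecTail] <;> ring
  have hF : ∀ d ∈ D, ∀ x ∈ F, (Tmat n 0 m)⁻¹ *ᵥ (x + castVec d) ∈ F := by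
    intro d hd x hx
    exact hfix.ge (Set.mem_biUnion hd ⟨x, hx, rfl⟩)
  have hinv : ∀ w ∈ F - F, f w ∈ F - F := by
    rintro w hw
    obtain ⟨d, hd, d', hd', hvv⟩ := hv
    rw [Set.mem_sub] at hw
    obtain ⟨x, hx, y, hy, rfl⟩ := hw
    rw [Set.mem_sub]
    refine ⟨_, hF d hd x hx, _, hF d' hd' y hy, ?_⟩
    rw [← Matrix.mulVec_sub]
    rw [hf]
    have hvd : (x + castVec d) - (y + castVec d') = (x - y) + castVec v := by
      funext i
      simp only [Pi.add_apply, Pi.sub_apply, castVec, hvv]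
      push_cast
      ring
    rw [hvd]
  have hfp : ∀ i, (c i)⁻¹ * (castVec z i + castVec v i) = castVec z i := by
    intro i
    fin_cases i
    · have hv0 : ((n:ℝ) - 1) * (z 0 : ℝ) = (v 0 : ℝ) := by exact_mod_cast h0
      simp only [hc, castVec, Fin.zero_eta, Matrix.cons_val_zero, Fin.isValue]
      field_simp
      linarith
    · have hv1 : ((m:ℝ) - 1) * (z 1 : ℝ) = (v 1 : ℝ) := by exact_mod_cast h1
      simp only [hc, castVec, Fin.mk_one, Matrix.cons_val_one, Matrix.head_cons, Matrix.cons_val_zero, Fin.isValue]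
      field_simp
      linarith
  obtain ⟨x₀, hx₀⟩ := hne
  set w₀ : Fin 2 → ℝ := x₀ - x₀ with hw₀
  have hw₀mem : w₀ ∈ F - F := Set.sub_mem_sub hx₀ hx₀
  set g : ℕ → (Fin 2 → ℝ) := fun k => f^[k] w₀ with hg
  have hgmem : ∀ k, g k ∈ F - F := by
    intro k
    induction k with
    | zero => simpa [hg] using hw₀mem
    | succ k ih =>
      have hstep : g (k+1) = f (g k) := by simp [hg, Function.iterate_succ_apply']
      rw [hstep]; exact hinv _ ih
  have hform : ∀ k, ∀ i, g k i = castVec z i + ((c i)⁻¹)^k * (w₀ i - castVec z i) := by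
    intro k
    induction k with
    | zero => intro i; simp [hg]
    | succ k ih =>
      intro i
      have hstep : g (k+1) = f (g k) := by simp [hg, Function.iterate_succ_apply']
      rw [hstep, hcomp _ i, ih i]
      have hfpi := hfp i
      calc (c i)⁻¹ * (castVec z i + ((c i)⁻¹)^k * (w₀ i - castVec z i) + castVec v i)
          = (c i)⁻¹ * (castVec z i + castVec v i)
            + (c i)⁻¹ * (((c i)⁻¹)^k * (w₀ i - castVec z i)) := by ring
        _ = castVec z i + ((c i)⁻¹)^(k+1) * (w₀ i - castVec z i) := by rw [hfpi]; ring
  have hc1 : ∀ i, (1:ℝ) < c i := by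
    have h2n : (1:ℝ) < n := by exact_mod_cast (by omega : (1:ℤ) < n)
    have h2m : (1:ℝ) < m := by exact_mod_cast (by omega : (1:ℤ) < m)
    intro i
    fin_cases i
    · exact h2n
    · exact h2m
  have hc2 : ∀ i, 0 ≤ (c i)⁻¹ ∧ (c i)⁻¹ < 1 := by
    intro i
    have h1i := hc1 i
    constructor
    · exact inv_nonneg.mpr (by linarith)
    · rw [inv_lt_one_iff₀]
      right
      exact h1i
  have htend : Tendsto g atTop (nhds (castVec z)) := by
    rw [tendsto_pi_nhds]
    intro i
    have heq : (fun k => g k i) = fun k => castVec z i + ((c i)⁻¹)^k * (w₀ i - castVec z i) :=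
      funext fun k => hform k i
    rw [heq]
    have h0' := tendsto_pow_atTop_nhds_zero_of_lt_one (hc2 i).1 (hc2 i).2
    simpa using tendsto_const_nhds.add (h0'.mul_const _)
  have hclosed : IsClosed (F - F) := by
    have himg : F - F = (fun p : (Fin 2 → ℝ) × (Fin 2 → ℝ) => p.1 - p.2) '' (F ×ˢ F) := by
      rw [Set.image_prod]
      exact (Set.image2_sub (s := F) (t := F)).symm
    rw [himg]
    exact ((hcpt.prod hcpt).image (continuous_fst.sub continuous_snd)).isClosed
  exact hclosed.mem_of_tendsto htend (Filter.Eventually.of_forall hgmem)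

lemma InDelta.neg' {D : Finset (Fin 2 → ℤ)} {v : Fin 2 → ℤ} (h : InDelta D v) :
    InDelta D (-v) := by
  obtain ⟨d, hd, d', hd', rfl⟩ := h
  exact ⟨d', hd', d, hd, by abel⟩


/-- For `T = [[n,0],[0,m]]` with `n ≥ m ≥ 2` and any finite digit set
`D ⊂ ℤ²`, with `b₁ = (n-1,0)ᵀ`, `b₂ = (0,m-1)ᵀ`, `b₃ = (n-1,m-1)ᵀ`: the neighbor set
`𝒩 = (F - F) ∩ (ℤ² \ {0})` of the attractor `F = F(T,D)` (the unique nonempty compact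
set with `F = ⋃_{d ∈ D} T⁻¹(F + d)`) contains
`{±k·eᵢ : k ≥ 1, i ∈ {1,2,3}, k·bᵢ ∈ ΔD} ∪ {±(k·e₁ + l·e₂) : k,l ≥ 1, k·b₁ + l·b₂ ∈ ΔD}
∪ {±(k·e₁ - l·e₂) : k,l ≥ 1, k·b₁ - l·b₂ ∈ ΔD}`. -/
theorem stmt11 (n m : ℤ) (hnm : m ≤ n) (hm : 2 ≤ m)
    (D : Finset (Fin 2 → ℤ)) (hD : D.Nonempty)
    (F : Set (Fin 2 → ℝ)) (hne : F.Nonempty) (hcpt : IsCompact F)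
    (hfix : F = ⋃ d ∈ D, (fun x => (Tmat n 0 m)⁻¹ *ᵥ (x + castVec d)) '' F) :
    {z : Fin 2 → ℤ |
        (∃ k : ℕ, 1 ≤ k ∧ InDelta D ((k : ℤ) • ![n - 1, 0]) ∧
          (z = (k : ℤ) • ![1, 0] ∨ z = -((k : ℤ) • ![1, 0]))) ∨
        (∃ k : ℕ, 1 ≤ k ∧ InDelta D ((k : ℤ) • ![0, m - 1]) ∧
          (z = (k : ℤ) • ![0, 1] ∨ z = -((k : ℤ) • ![0, 1]))) ∨
        (∃ k : ℕ, 1 ≤ k ∧ InDelta D ((k : ℤ) • ![n - 1, m - 1]) ∧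
          (z = (k : ℤ) • ![1, 1] ∨ z = -((k : ℤ) • ![1, 1]))) ∨
        (∃ k l : ℕ, 1 ≤ k ∧ 1 ≤ l ∧
          InDelta D ((k : ℤ) • ![n - 1, 0] + (l : ℤ) • ![0, m - 1]) ∧
          (z = (k : ℤ) • ![1, 0] + (l : ℤ) • ![0, 1] ∨
            z = -((k : ℤ) • ![1, 0] + (l : ℤ) • ![0, 1]))) ∨
        (∃ k l : ℕ, 1 ≤ k ∧ 1 ≤ l ∧
          InDelta D ((k : ℤ) • ![n - 1, 0] - (l : ℤ) • ![0, m - 1]) ∧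
          (z = (k : ℤ) • ![1, 0] - (l : ℤ) • ![0, 1] ∨
            z = -((k : ℤ) • ![1, 0] - (l : ℤ) • ![0, 1])))} ⊆
      {z : Fin 2 → ℤ | z ≠ 0 ∧ castVec z ∈ F - F} := by
  have hn : 2 ≤ n := le_trans hm hnm
  intro z hz
  simp only [Set.mem_setOf_eq] at hz ⊢
  have hkey := key n m hn hm D F hne hcpt hfix
  rcases hz with ⟨k, hk, hv, hz|hz⟩ | ⟨k, hk, hv, hz|hz⟩ | ⟨k, hk, hv, hz|hz⟩ |
    ⟨k, l, hk, hl, hv, hz|hz⟩ | ⟨k, l, hk, hl, hv, hz|hz⟩ <;> subst hz <;>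
    refine ⟨by
      intro h
      have h0 := congrFun h 0
      have h1 := congrFun h 1
      simp [Pi.smul_apply, Pi.neg_apply, Pi.add_apply, Pi.sub_apply, smul_eq_mul] at h0 h1 <;>
      omega, ?_⟩
  · exact hkey _ _ hv (by simp; ring) (by simp)
  · exact hkey _ _ hv.neg' (by simp; ring) (by simp)
  · exact hkey _ _ hv (by simp) (by simp; ring)
  · exact hkey _ _ hv.neg' (by simp) (by simp; ring)
  · exact hkey _ _ hv (by simp; ring) (by simp; ring)
  · exact hkey _ _ hv.neg' (by simp; ring) (by simp; ring)
  · exact hkey _ _ hv (by simp; ring) (by simp; ring)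
  · exact hkey _ _ hv.neg' (by simp; ring) (by simp; ring)
  · exact hkey _ _ hv (by simp; ring) (by simp; ring)
  · exact hkey _ _ hv.neg' (by simp; ring) (by simp; ring)
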